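/- Let H be a polarized pure Hodge structure of weight w whose Hodge numbers h^{p,q} vanish for p > w − c and q > w − c for some c ≥ 1 (coniveau ≥ c). For any nilpotent endomorphism N arising as the logarithm of monodromy of a degeneration with limit MHS whose weight-graded pieces are constrained by the Hodge filtration (N^k: Gr^W_{w+k} ≅ Gr^W_{w−k}), the nilpotency index of N is at most w − 2c + 2. Abstract version: if N is a nilpotent endomorphism of a bifiltered vector space (W, F) forming a limit MHS with F^{w−c+1} = 0, then N^{w−2c+2} = 0. -/

import Mathlib

/-- coniveau bound on the nilpotency index: Let `(V, W, F, N)` be (the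
complexification of) a limit mixed Hodge structure of weight `w`, encoded by its Deligne
bigrading `I^{p,q}` (so `W_k = ⊕_{p+q≤k} I^{p,q}` and `F^p = ⊕_{p'≥p} I^{p',q}`), with
`N(I^{p,q}) ⊆ I^{p−1,q−1}`, the conjugation symmetry `dim I^{p,q} = dim I^{q,p}`, and the
hard Lefschetz isomorphisms `N^k : I^{p,q} ≅ I^{p−k,q−k}` for `p + q = w + k`.  If the
underlying variation has coniveau `≥ c ≥ 1`, i.e. `F^{w−c+1} = 0` (meaning `I^{p,q} = 0`
for `p ≥ w − c + 1`), then `N^{w−2c+2} = 0`. -/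
theorem stmt_15 (V : Type*) [AddCommGroup V] [Module ℂ V] [FiniteDimensional ℂ V]
    (w c : ℕ) (hc : 1 ≤ c) (hcw : 2 * c ≤ w)
    (N : Module.End ℂ V)
    (I : ℤ → ℤ → Submodule ℂ V)
    (hinternal : DirectSum.IsInternal fun pq : ℤ × ℤ => I pq.1 pq.2)
    (hbound : ∀ p q : ℤ, p < 0 ∨ q < 0 → I p q = ⊥)
    (hsym : ∀ p q : ℤ, Module.finrank ℂ (I p q) = Module.finrank ℂ (I q p))
    (hN : ∀ p q : ℤ, ∀ x ∈ I p q, N x ∈ I (p - 1) (q - 1))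
    (hHL : ∀ (k : ℕ) (p q : ℤ), p + q = (w : ℤ) + k →
      (Submodule.map ((N ^ k : Module.End ℂ V) : V →ₗ[ℂ] V) (I p q)
          = I (p - k) (q - k)) ∧
      (∀ x ∈ I p q, (N ^ k) x = 0 → x = 0))
    (hF : ∀ p q : ℤ, (w : ℤ) - c + 1 ≤ p → I p q = ⊥) :
    N ^ (w - 2 * c + 2) = 0 := by
  set m : ℕ := w - 2 * c + 2 with hm
  have hmz : (m : ℤ) = (w : ℤ) - 2 * c + 2 := by
    have : ((w - 2 * c : ℕ) : ℤ) = (w : ℤ) - 2 * c := by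
      rw [Nat.cast_sub hcw]; push_cast; ring
    simp [hm]; omega
  -- symmetric vanishing: I p q = ⊥ when the *second* index is large
  have hF' : ∀ p q : ℤ, (w : ℤ) - c + 1 ≤ q → I p q = ⊥ := by
    intro p q hq
    have h1 : I q p = ⊥ := hF q p hq
    have h2 := hsym p q
    rw [h1, finrank_bot] at h2
    exact Submodule.finrank_eq_zero.1 h2
  -- iterated action of N on the bigrading
  have hNiter : ∀ (k : ℕ) (p q : ℤ), ∀ x ∈ I p q, (N ^ k) x ∈ I (p - k) (q - k) := by
    intro k
    induction k with
    | zero => intro p q x hx; simpa using hx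
    | succ k ih =>
      intro p q x hx
      have h1 := hN (p - k) (q - k) _ (ih p q x hx)
      have h2 : (N ^ (k + 1)) x = N ((N ^ k) x) := by
        rw [pow_succ']; rfl
      rw [h2]
      convert h1 using 2 <;> push_cast <;> ring
  -- key lemma: any nonzero piece in weight ≤ w has first index ≥ c
  have key : ∀ a b : ℤ, a + b ≤ (w : ℤ) → I a b ≠ ⊥ → (c : ℤ) ≤ a := by
    intro a b hab hne
    by_contra hlt
    push_neg at hlt
    set k : ℕ := ((w : ℤ) - a - b).toNat with hk
    have hkz : (k : ℤ) = (w : ℤ) - a - b := Int.toNat_of_nonneg (by omega)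
    have hsum : (a + k) + (b + k) = (w : ℤ) + k := by omega
    have hzero : I (a + k) (b + k) = ⊥ := hF' _ _ (by omega)
    have hmap := (hHL k (a + k) (b + k) hsum).1
    rw [hzero, Submodule.map_bot] at hmap
    apply hne
    have h2 := hmap.symm
    convert h2 using 2 <;> ring
  -- vanishing of N^m on each piece
  have hpiece : ∀ p q : ℤ, ∀ x ∈ I p q, (N ^ m) x = 0 := by
    intro p q x hx
    rcases eq_or_ne (I p q) ⊥ with hbot | hne
    · rw [hbot, Submodule.mem_bot] at hx
      rw [hx, map_zero]
    · have hp0 : (0 : ℤ) ≤ p := by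
        by_contra h; exact hne (hbound p q (Or.inl (by omega)))
      have hq0 : (0 : ℤ) ≤ q := by
        by_contra h; exact hne (hbound p q (Or.inr (by omega)))
      have hpw : p ≤ (w : ℤ) - c := by
        by_contra h; exact hne (hF p q (by omega))
      have hqw : q ≤ (w : ℤ) - c := by
        by_contra h; exact hne (hF' p q (by omega))
      have hmem : (N ^ m) x ∈ I (p - m) (q - m) := hNiter m p q x hx
      have hbotm : I (p - m) (q - m) = ⊥ := by
        by_contra h
        have := key (p - m) (q - m) (by omega) h
        omega
      rw [hbotm, Submodule.mem_bot] at hmem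
      exact hmem
  -- conclude via the direct sum decomposition
  have htop : (⨆ pq : ℤ × ℤ, I pq.1 pq.2) = ⊤ := hinternal.submodule_iSup_eq_top
  ext x
  have hx : x ∈ ⨆ pq : ℤ × ℤ, I pq.1 pq.2 := htop ▸ Submodule.mem_top
  simp only [LinearMap.zero_apply]
  refine Submodule.iSup_induction (motive := fun y => (N ^ m) y = 0) _ hx ?_ ?_ ?_
  · intro pq y hy; exact hpiece pq.1 pq.2 y hy
  · exact map_zero _
  · intro a b ha hb; rw [map_add, ha, hb, add_zero]
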